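/- The symmetric operad of analytic operations of the Lawvere theory of monoids is isomorphic to the operad of symmetries Sym: every analytic morphism n → 1 in the Lawvere theory of monoids is of the form x_1,...,x_n ↦ x_{σ(1)}·...·x_{σ(n)} for a unique σ ∈ S_n, and composition of such operations corresponds to the operadic composition in Sym. -/

import Mathlib

/-- One step of the lexicographic decomposition of a sigma of `Fin`s. -/
def finSigmaSucc {k : ℕ} (ns : Fin (k + 1) → ℕ) :
    (Σ i : Fin (k + 1), Fin (ns i)) ≃ (Fin (ns 0) ⊕ Σ i : Fin k, Fin (ns i.succ)) where
  toFun p := Fin.cases (motive := fun i => Fin (ns i) → Fin (ns 0) ⊕ Σ i : Fin k, Fin (ns i.succ))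
      (fun j => Sum.inl j) (fun i j => Sum.inr ⟨i, j⟩) p.1 p.2
  invFun q := q.elim (fun j => ⟨0, j⟩) (fun q => ⟨q.1.succ, q.2⟩)
  left_inv := by rintro ⟨i, j⟩; induction i using Fin.cases <;> simp
  right_inv := by rintro (j | ⟨i, j⟩) <;> simp

/-- The lexicographic identification of `Σ i, Fin (ns i)` with `Fin (∑ i, ns i)`. -/
def finSigma : ∀ {k : ℕ} (ns : Fin k → ℕ), (Σ i : Fin k, Fin (ns i)) ≃ Fin (∑ i, ns i)
  | 0, ns => (Equiv.equivOfIsEmpty _ _ : (Σ i : Fin 0, Fin (ns i)) ≃ Fin 0).trans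
      (finCongr (by simp))
  | k + 1, ns =>
    (finSigmaSucc ns).trans <|
      ((Equiv.refl (Fin (ns 0))).sumCongr (finSigma fun i => ns i.succ)).trans <|
        finSumFinEquiv.trans (finCongr (Fin.sum_univ_succ ns).symm)

/-- Operadic composition of permutations: on the lexicographic block decomposition,
`⟨i, r⟩ ↦ ⟨τ i, σs (τ i) r⟩`. -/
def symComp {k : ℕ} (ns : Fin k → ℕ) (σs : ∀ i, Equiv.Perm (Fin (ns i)))
    (τ : Equiv.Perm (Fin k)) : Equiv.Perm (Fin (∑ i, ns i)) :=
  (finCongr (Equiv.sum_comp τ ns)).symm.trans <|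
    ((finSigma fun i => ns (τ i)).symm.trans
      ((Equiv.sigmaCongr τ fun i => σs (τ i)).trans (finSigma ns)))

/-- A symmetric operad. -/
structure SymOperad where
  ops : ℕ → Type
  unit : ops 1
  comp : ∀ {k : ℕ} (ns : Fin k → ℕ), (∀ i, ops (ns i)) → ops k → ops (∑ i, ns i)
  act : ∀ {n : ℕ}, Equiv.Perm (Fin n) → ops n → ops n
  act_one : ∀ {n : ℕ} (x : ops n), act (Equiv.refl (Fin n)) x = x
  act_mul : ∀ {n : ℕ} (σ τ : Equiv.Perm (Fin n)) (x : ops n),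
    act (σ * τ) x = act σ (act τ x)
  comp_unit_left : ∀ {n : ℕ} (g : ops n),
    HEq (comp (fun _ : Fin n => 1) (fun _ => unit) g) g
  comp_unit_right : ∀ {n : ℕ} (g : ops n),
    HEq (comp (fun _ : Fin 1 => n) (fun _ => g) unit) g
  comp_assoc : ∀ {k : ℕ} (ns : Fin k → ℕ) (ms : ∀ i, Fin (ns i) → ℕ)
    (hs : ∀ i j, ops (ms i j)) (gs : ∀ i, ops (ns i)) (f : ops k),
    HEq (comp (fun p => ms ((finSigma ns).symm p).1 ((finSigma ns).symm p).2)
          (fun p => hs ((finSigma ns).symm p).1 ((finSigma ns).symm p).2)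
          (comp ns gs f))
        (comp (fun i => ∑ j, ms i j) (fun i => comp (ms i) (hs i) (gs i)) f)
  equiv_inner : ∀ {k : ℕ} (ns : Fin k → ℕ) (σs : ∀ i, Equiv.Perm (Fin (ns i)))
    (gs : ∀ i, ops (ns i)) (f : ops k),
    comp ns (fun i => act (σs i) (gs i)) f
      = act (symComp ns σs (Equiv.refl (Fin k))) (comp ns gs f)
  equiv_outer : ∀ {k : ℕ} (ns : Fin k → ℕ) (τ : Equiv.Perm (Fin k))
    (gs : ∀ i, ops (ns i)) (f : ops k),
    HEq (comp (fun i => ns (τ i)) (fun i => gs (τ i)) (act τ f))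
        (act (symComp ns (fun i => Equiv.refl (Fin (ns i))) τ) (comp ns gs f))

/-- Composition `a ∗ b` of unary operations of an operad. -/
def SymOperad.comp1 (O : SymOperad) (a b : O.ops 1) : O.ops 1 :=
  cast (congrArg O.ops (by simp)) (O.comp (fun _ : Fin 1 => 1) (fun _ => a) b)

/-- Composition `⟨c 1, …, c r⟩ ∗ h` of an `r`-ary operation with unary operations. -/
def SymOperad.unaryComp (O : SymOperad) {r : ℕ} (c : Fin r → O.ops 1) (h : O.ops r) :
    O.ops r :=
  cast (congrArg O.ops (by simp)) (O.comp (fun _ : Fin r => 1) c h)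
/-- A Lawvere theory: a category with objects the natural numbers where `n` is the
`n`-fold power of `1` with chosen projections.  `comp f g` is `f` followed by `g`. -/
structure LawTheory where
  Hom : ℕ → ℕ → Type
  id : ∀ n : ℕ, Hom n n
  comp : ∀ {a b c : ℕ}, Hom a b → Hom b c → Hom a c
  id_comp : ∀ {a b : ℕ} (f : Hom a b), comp (id a) f = f
  comp_id : ∀ {a b : ℕ} (f : Hom a b), comp f (id b) = f
  assoc : ∀ {a b c d : ℕ} (f : Hom a b) (g : Hom b c) (h : Hom c d),
    comp (comp f g) h = comp f (comp g h)
  proj : ∀ (n : ℕ), Fin n → Hom n 1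
  tuple : ∀ {a n : ℕ}, (Fin n → Hom a 1) → Hom a n
  tuple_proj : ∀ {a n : ℕ} (fs : Fin n → Hom a 1) (i : Fin n),
    comp (tuple fs) (proj n i) = fs i
  tuple_eta : ∀ {a n : ℕ} (g : Hom a n),
    tuple (fun i => comp g (proj n i)) = g

namespace LawTheory

variable (T : LawTheory)

/-- The structural morphism `π_φ : n → m` induced by a function `φ : (m] → (n]`. -/
def pi {n m : ℕ} (φ : Fin m → Fin n) : T.Hom n m :=
  T.tuple fun i => T.proj n (φ i)

/-- The product map `f₁ × ⋯ × f_k : ∑ ns i → k` of operations `fs i : ns i → 1`,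
formed via the chosen projections and the lexicographic block decomposition. -/
def prodMap {k : ℕ} (ns : Fin k → ℕ) (fs : ∀ i, T.Hom (ns i) 1) :
    T.Hom (∑ i, ns i) k :=
  T.tuple fun i => T.comp (T.pi fun j : Fin (ns i) => finSigma ns ⟨i, j⟩) (fs i)

/-- Operadic composition of the operations of a Lawvere theory:
`⟨f₁,…,f_k⟩ ∗ f = f ∘ (f₁ × ⋯ × f_k)`. -/
def opComp {k : ℕ} (ns : Fin k → ℕ) (fs : ∀ i, T.Hom (ns i) 1) (f : T.Hom k 1) :
    T.Hom (∑ i, ns i) 1 :=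
  T.comp (T.prodMap ns fs) f

/-- The action `σ · f = f ∘ π_σ` of a permutation on an operation. -/
def opAct {n : ℕ} (σ : Equiv.Perm (Fin n)) (f : T.Hom n 1) : T.Hom n 1 :=
  T.comp (T.pi ⇑σ) f

/-- A morphism `f : a → b` is invertible (an isomorphism). -/
def IsInvertible {a b : ℕ} (f : T.Hom a b) : Prop :=
  ∃ g : T.Hom b a, T.comp f g = T.id a ∧ T.comp g f = T.id b

/-- Structural morphisms: the closure under isomorphism of the image of the unique
interpretation from the initial Lawvere theory `𝔽ᵒᵖ`. -/
def Structural {n m : ℕ} (f : T.Hom n m) : Prop :=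
  ∃ (φ : Fin m → Fin n) (u : T.Hom n n) (v : T.Hom m m),
    T.IsInvertible u ∧ T.IsInvertible v ∧ f = T.comp u (T.comp (T.pi φ) v)

/-- `e` is left orthogonal to `m`: unique diagonal fillers exist. -/
def Orthogonal {a b c d : ℕ} (e : T.Hom a b) (m : T.Hom c d) : Prop :=
  ∀ (u : T.Hom a c) (v : T.Hom b d), T.comp u m = T.comp e v →
    ∃! w : T.Hom b c, T.comp e w = u ∧ T.comp w m = v

/-- Analytic morphisms: those right orthogonal to all structural morphisms. -/
def Analytic {c d : ℕ} (f : T.Hom c d) : Prop :=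
  ∀ {a b : ℕ} (e : T.Hom a b), T.Structural e → T.Orthogonal e f

/-- The canonical map `ρ_n : S_n × Aut(1)ⁿ → Hom(n,n)`,
`(σ, a) ↦ (a₁ × ⋯ × a_n) ∘ π_σ`. -/
def rho (n : ℕ)
    (p : Equiv.Perm (Fin n) × (Fin n → {f : T.Hom 1 1 // T.IsInvertible f})) :
    T.Hom n n :=
  T.comp (T.pi ⇑p.1) (T.tuple fun i => T.comp (T.proj n i) (p.2 i).1)

/-- `T` has simple automorphisms: each `ρ_n` is a bijection onto the automorphisms. -/
def HasSimpleAut : Prop :=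
  ∀ n : ℕ, Function.Injective (T.rho n) ∧
    Set.range (T.rho n) = {f : T.Hom n n | T.IsInvertible f}

/-- `T` is an analytic Lawvere theory: structural and analytic morphisms form a
factorization system and `T` has simple automorphisms. -/
def IsAnalyticTheory : Prop :=
  (∀ {n m : ℕ} (f : T.Hom n m), ∃ (k : ℕ) (e : T.Hom n k) (g : T.Hom k m),
      T.Structural e ∧ T.Analytic g ∧ f = T.comp e g) ∧ T.HasSimpleAut

end LawTheory

/-- A morphism of symmetric operads. -/
structure OperadHom (O O' : SymOperad) where
  map : ∀ n : ℕ, O.ops n → O'.ops n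
  map_unit : map 1 O.unit = O'.unit
  map_comp : ∀ {k : ℕ} (ns : Fin k → ℕ) (gs : ∀ i, O.ops (ns i)) (f : O.ops k),
    map _ (O.comp ns gs f) = O'.comp ns (fun i => map _ (gs i)) (map k f)
  map_act : ∀ {n : ℕ} (σ : Equiv.Perm (Fin n)) (x : O.ops n),
    map n (O.act σ x) = O'.act σ (map n x)

/-- An interpretation of Lawvere theories: an identity-on-objects functor
preserving the chosen projections. -/
structure LawHom (T T' : LawTheory) where
  map : ∀ {a b : ℕ}, T.Hom a b → T'.Hom a b
  map_id : ∀ n : ℕ, map (T.id n) = T'.id n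
  map_comp : ∀ {a b c : ℕ} (f : T.Hom a b) (g : T.Hom b c),
    map (T.comp f g) = T'.comp (map f) (map g)
  map_proj : ∀ (n : ℕ) (i : Fin n), map (T.proj n i) = T'.proj n i

/-- `S` is the symmetric operad of operations of the Lawvere theory `T`. -/
def IsOperadOf (T : LawTheory) (S : SymOperad) : Prop :=
  S.ops = (fun n => T.Hom n 1) ∧ HEq S.unit (T.id 1) ∧
    HEq (@SymOperad.comp S) (@LawTheory.opComp T) ∧
    HEq (@SymOperad.act S) (@LawTheory.opAct T)
/-- The Lawvere theory of monoids: morphisms `n → m` are `m`-tuples of elements of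
the free monoid (words) on `n` generators. -/
def MonLT : LawTheory where
  Hom n m := Fin m → List (Fin n)
  id n := fun i => [i]
  comp f g := fun j => (g j).flatMap f
  id_comp f := funext fun j => by
    show (f j).flatMap (fun i => [i]) = f j
    simp
  comp_id f := funext fun j => by
    show ([j] : List (Fin _)).flatMap f = f j
    simp
  assoc f g h := funext fun j => by
    show (h j).flatMap (fun b => (g b).flatMap f) = ((h j).flatMap g).flatMap f
    simp [List.flatMap_assoc]
  proj _ i := fun _ => [i]
  tuple fs := fun i => fs i 0
  tuple_proj fs i := funext fun j => by
    have : j = 0 := Subsingleton.elim _ _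
    subst this
    show ([i] : List (Fin _)).flatMap (fun i => fs i 0) = fs i 0
    simp
  tuple_eta g := funext fun i => by
    show ([i] : List (Fin _)).flatMap g = g i
    simp

theorem finSigma_zero {k : ℕ} (ns : Fin (k+1) → ℕ) (j : Fin (ns 0)) :
    finSigma ns ⟨0, j⟩ = Fin.cast (Fin.sum_univ_succ ns).symm (Fin.castAdd _ j) := by
  simp [finSigma, finSigmaSucc, finCongr]

theorem finSigma_succ {k : ℕ} (ns : Fin (k+1) → ℕ) (i : Fin k) (j : Fin (ns i.succ)) :
    finSigma ns ⟨i.succ, j⟩ = Fin.cast (Fin.sum_univ_succ ns).symm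
      (Fin.natAdd (ns 0) (finSigma (fun t => ns t.succ) ⟨i, j⟩)) := by
  simp [finSigma, finSigmaSucc, finCongr]

theorem ofFn_cast {α : Type} {m n : ℕ} (h : m = n) (f : Fin n → α) :
    List.ofFn (fun i : Fin m => f (Fin.cast h i)) = List.ofFn f := by
  subst h; rfl

theorem flatten_ofFn_ofFn {α : Type} : ∀ {k : ℕ} (ns : Fin k → ℕ)
    (G : (Σ i : Fin k, Fin (ns i)) → α),
    (List.ofFn fun i => List.ofFn fun j => G ⟨i, j⟩).flatten
      = List.ofFn (fun p => G ((finSigma ns).symm p))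
  | 0, ns, G => by
    have h : (∑ i : Fin 0, ns i) = 0 := by simp
    simp [List.ofFn_eq_nil_iff, h]
  | k + 1, ns, G => by
    rw [List.ofFn_succ]
    simp only [List.flatten_cons]
    rw [flatten_ofFn_ofFn (fun t => ns t.succ) (fun q => G ⟨q.1.succ, q.2⟩)]
    rw [← ofFn_cast (Fin.sum_univ_succ ns).symm (fun p => G ((finSigma ns).symm p)),
      List.ofFn_add]
    congr 1
    · refine congrArg List.ofFn (funext fun j => congrArg G ?_)
      rw [Equiv.eq_symm_apply, finSigma_zero]; rfl
    · refine congrArg List.ofFn (funext fun p => congrArg G ?_)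
      rw [Equiv.eq_symm_apply, finSigma_succ, Sigma.eta, Equiv.apply_symm_apply]

theorem flatMap_sing {α β : Type} (l : List α) (h : α → β) :
    l.flatMap (fun j => [h j]) = l.map h := by
  induction l with
  | nil => rfl
  | cons a l ih => simp [ih]

theorem part2_aux (k : ℕ) (ns : Fin k → ℕ) (σs : ∀ i, Equiv.Perm (Fin (ns i)))
    (τ : Equiv.Perm (Fin k)) :
    MonLT.opComp ns (fun i => fun _ => List.ofFn ⇑(σs i)) (fun _ => List.ofFn ⇑τ)
      = fun _ => List.ofFn ⇑(symComp ns σs τ) := by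
  funext x
  show (List.ofFn ⇑τ).flatMap
      (fun i => (List.ofFn ⇑(σs i)).flatMap (fun j => [finSigma ns ⟨i, j⟩]))
    = List.ofFn ⇑(symComp ns σs τ)
  simp only [flatMap_sing, List.map_ofFn]
  rw [show ((List.ofFn ⇑τ).flatMap
        fun i => List.ofFn ((fun j => finSigma ns ⟨i, j⟩) ∘ ⇑(σs i)))
      = (List.ofFn fun t => List.ofFn fun r : Fin (ns (τ t)) =>
          finSigma ns ⟨τ t, σs (τ t) r⟩).flatten by
    rw [List.flatMap_def, List.map_ofFn]; rfl]
  rw [flatten_ofFn_ofFn (fun t => ns (τ t))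
    (fun q => finSigma ns ⟨τ q.1, σs (τ q.1) q.2⟩)]
  rw [← ofFn_cast (Equiv.sum_comp τ ns) (⇑(symComp ns σs τ))]
  refine congrArg List.ofFn (funext fun p => ?_)
  show _ = symComp ns σs τ (Fin.cast _ p)
  rfl


theorem split_unique {α β : Type} (ψ : β → α) :
    ∀ (us : List (List α)) (V : List β), V.map ψ = us.flatten →
    ∃! Ws : List (List β), Ws.map (List.map ψ) = us ∧ Ws.flatten = V
  | [], V, h => by
    have hV : V = [] := by simpa using congrArg List.length h
    subst hV
    exact ⟨[], ⟨rfl, rfl⟩, fun Ws hWs => by simpa using congrArg List.length hWs.1⟩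
  | u :: us, V, h => by
    have h1 : (V.take u.length).map ψ = u := by
      rw [List.map_take, h]
      simp
    have h2 : (V.drop u.length).map ψ = us.flatten := by
      rw [List.map_drop, h]
      simp
    obtain ⟨Ws₂, ⟨hm, hf⟩, huniq⟩ := split_unique ψ us (V.drop u.length) h2
    refine ⟨V.take u.length :: Ws₂, ⟨by simp [h1, hm], by simp [hf]⟩, ?_⟩
    rintro (_ | ⟨W₁, Ws₂'⟩) ⟨hm', hf'⟩
    · simp at hm'
    · simp only [List.map_cons, List.cons.injEq] at hm'
      obtain ⟨hW₁, hWs₂'⟩ := hm'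
      have hlen : W₁.length = u.length := by rw [← hW₁]; simp
      simp only [List.flatten_cons] at hf'
      have hW1 : W₁ = V.take u.length := by
        rw [← hf', ← hlen, List.take_left]
      have hW2 : Ws₂'.flatten = V.drop u.length := by
        rw [← hf', ← hlen, List.drop_left]
      rw [hW1, huniq Ws₂' ⟨hWs₂', hW2⟩]

theorem singleton_of_comp_id {n : ℕ} (f g : Fin n → List (Fin n))
    (hfg : ∀ j, (g j).flatMap f = [j]) (hgf : ∀ j, (f j).flatMap g = [j]) :
    ∀ j, ∃ a, g j = [a] ∧ f a = [j] := by
  have fne : ∀ a, f a ≠ [] := by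
    intro a h
    have := hgf a
    rw [h] at this
    simp at this
  intro j
  have h := hfg j
  rcases hgj : g j with _ | ⟨a, l⟩
  · rw [hgj] at h; simp at h
  · rw [hgj, List.flatMap_cons] at h
    rcases hfa : f a with _ | ⟨b, fb⟩
    · exact absurd hfa (fne a)
    · rw [hfa] at h
      simp only [List.cons_append, List.cons.injEq] at h
      obtain ⟨rfl, h2⟩ := h
      rw [List.append_eq_nil_iff] at h2
      rcases hl : l with _ | ⟨c, l'⟩
      · subst hl
        exact ⟨a, rfl, by rw [hfa, h2.1]⟩
      · exfalso
        rw [hl, List.flatMap_cons] at h2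
        rcases List.append_eq_nil_iff.1 h2.2 with ⟨hc, -⟩
        exact fne c hc

theorem inv_perm {n : ℕ} (f : MonLT.Hom n n) (hf : MonLT.IsInvertible f) :
    ∃ σ : Equiv.Perm (Fin n), f = fun j => ([σ j] : List (Fin n)) := by
  obtain ⟨g, hfg, hgf⟩ := hf
  have h1 : ∀ j, (g j).flatMap f = [j] := fun j => congrFun hfg j
  have h2 : ∀ j, (f j).flatMap g = [j] := fun j => congrFun hgf j
  choose G hG1 hG2 using singleton_of_comp_id f g h1 h2
  choose F hF1 hF2 using singleton_of_comp_id g f h2 h1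
  have hl : ∀ j, G (F j) = j := by
    intro j
    have := (hG1 (F j)).symm.trans (hF2 j)
    simpa using this
  have hr : ∀ j, F (G j) = j := by
    intro j
    have := (hF1 (G j)).symm.trans (hG2 j)
    simpa using this
  exact ⟨⟨F, G, hl, hr⟩, funext fun j => hF1 j⟩

theorem structural_char {a b : ℕ} (e : MonLT.Hom a b) (he : MonLT.Structural e) :
    ∃ ψ : Fin b → Fin a, e = fun j => ([ψ j] : List (Fin a)) := by
  obtain ⟨φ, u, v, hu, hv, rfl⟩ := he
  obtain ⟨α, rfl⟩ := inv_perm u hu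
  obtain ⟨β, rfl⟩ := inv_perm v hv
  refine ⟨fun j => α (φ (β j)), funext fun j => ?_⟩
  show ((([β j] : List (Fin b)).flatMap (MonLT.pi φ)).flatMap fun j => [α j]) = _
  show ((([β j] : List (Fin b)).flatMap fun i => [φ i]).flatMap fun j => [α j]) = _
  simp

theorem structural_pi (T : LawTheory) {a b : ℕ} (φ : Fin b → Fin a) :
    T.Structural (T.pi φ) :=
  ⟨φ, T.id a, T.id b, ⟨T.id a, T.id_comp _, T.id_comp _⟩,
    ⟨T.id b, T.id_comp _, T.id_comp _⟩, by rw [T.comp_id, T.id_comp]⟩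


theorem hom1_ext {a : ℕ} {f g : MonLT.Hom a 1} (h : f 0 = g 0) : f = g :=
  funext fun x => by rw [Subsingleton.elim x 0]; exact h

theorem analytic_of_perm {n : ℕ} (σ : Equiv.Perm (Fin n)) :
    MonLT.Analytic (fun _ => List.ofFn ⇑σ : MonLT.Hom n 1) := by
  intro a b e he u v hsq
  obtain ⟨ψ, rfl⟩ := structural_char e he
  have h0 : (List.ofFn ⇑σ).flatMap u = (v 0).flatMap (fun j => [ψ j]) := congrFun hsq 0
  have hsq0 : (v 0).map ψ = (List.ofFn fun i => u (σ i)).flatten := by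
    calc (v 0).map ψ = (v 0).flatMap (fun j => [ψ j]) := (flatMap_sing _ _).symm
    _ = (List.ofFn ⇑σ).flatMap u := h0.symm
    _ = (List.ofFn fun i => u (σ i)).flatten := by erw [List.flatMap_def, List.map_ofFn]; rfl
  obtain ⟨Ws, ⟨hWm, hWf⟩, hWu⟩ := split_unique ψ (List.ofFn fun i => u (σ i)) (v 0) hsq0
  have hWl : Ws.length = n := by
    have := congrArg List.length hWm
    simpa using this
  have key : ∀ w' : Fin n → List (Fin b),
      (MonLT.comp (fun j => [ψ j]) w' = u ∧
        MonLT.comp w' (fun _ => List.ofFn ⇑σ) = v)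
      ↔ ((List.ofFn fun i => w' (σ i)).map (List.map ψ)
            = (List.ofFn fun i => u (σ i))
          ∧ (List.ofFn fun i => w' (σ i)).flatten = v 0) := by
    intro w'
    constructor
    · rintro ⟨h1, h2⟩
      constructor
      · rw [List.map_ofFn]
        refine congrArg List.ofFn (funext fun i => ?_)
        show List.map ψ (w' (σ i)) = u (σ i)
        rw [← congrFun h1 (σ i)]
        exact (flatMap_sing _ _).symm
      · have := congrFun h2 0
        calc (List.ofFn fun i => w' (σ i)).flatten
            = (List.ofFn ⇑σ).flatMap w' := by rw [List.flatMap_def, List.map_ofFn]; rfl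
        _ = v 0 := this
    · rintro ⟨h1, h2⟩
      constructor
      · funext j
        show (w' j).flatMap (fun t => [ψ t]) = u j
        rw [flatMap_sing]
        have h1' : (List.ofFn fun i => List.map ψ (w' (σ i)))
            = List.ofFn fun i => u (σ i) := by
          rw [← h1, List.map_ofFn]
          rfl
        have := congrFun (List.ofFn_inj.1 h1') (σ.symm j)
        simpa using this
      · refine hom1_ext ?_
        show (List.ofFn ⇑σ).flatMap w' = v 0
        rw [List.flatMap_def, List.map_ofFn]
        exact h2
  set w : Fin n → List (Fin b) :=
    fun j => Ws.get (Fin.cast hWl.symm (σ.symm j)) with hwdef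
  have hofFn : (List.ofFn fun i => w (σ i)) = Ws := by
    have : (fun i : Fin n => w (σ i))
        = fun i : Fin n => Ws.get (Fin.cast hWl.symm i) := by
      funext i
      rw [hwdef]
      simp
    rw [this, ofFn_cast hWl.symm Ws.get, List.ofFn_get]
  refine ⟨w, (key w).2 ⟨by rw [hofFn]; exact hWm, by rw [hofFn]; exact hWf⟩, ?_⟩
  intro w' hw'
  have hWs : (List.ofFn fun i => w' (σ i)) = Ws := hWu _ ((key w').1 hw')
  have := List.ofFn_inj.1 (hWs.trans hofFn.symm)
  funext j
  have := congrFun this (σ.symm j)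
  simpa using this

theorem mem_of_analytic {n : ℕ} (f : MonLT.Hom n 1) (hf : MonLT.Analytic f)
    (i : Fin n) : i ∈ f 0 := by
  by_contra hi
  set w₀ := f 0 with hw₀
  set m := w₀.length with hm
  have horth := hf (MonLT.pi (fun _ : Fin 2 => (0 : Fin 1)))
    (structural_pi MonLT _) (fun _ => [(0 : Fin 1)])
    (fun _ => List.replicate m (0 : Fin 2)) ?_
  · obtain ⟨w, -, huniq⟩ := horth
    have c1 : ∀ wc : Fin n → List (Fin 2),
        (∀ j, wc j = [(0:Fin 2)] ∨ wc j = [(1:Fin 2)]) →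
        (∀ x ∈ w₀, wc x = [(0:Fin 2)]) →
        ((MonLT.comp (MonLT.pi (fun _ : Fin 2 => (0 : Fin 1))) wc
            = (fun _ => [(0 : Fin 1)] : MonLT.Hom 1 n))
          ∧ MonLT.comp wc f = fun _ => List.replicate m (0 : Fin 2)) := by
      intro wc hsing hmem
      constructor
      · funext j
        show (wc j).flatMap (fun _ => [(0 : Fin 1)]) = [(0 : Fin 1)]
        rcases hsing j with h | h <;> rw [h] <;> simp
      · refine hom1_ext ?_
        show w₀.flatMap wc = List.replicate m (0 : Fin 2)
        rw [List.flatMap_def,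
          show List.map wc w₀ = List.map (fun _ => [(0:Fin 2)]) w₀ from
            List.map_congr_left hmem,
          ← List.flatMap_def, flatMap_sing]
        simp [hm]
    have e1 := huniq (fun _ => [(0:Fin 2)])
      (c1 (fun _ => [(0:Fin 2)]) (fun j => Or.inl rfl) (fun x _ => rfl))
    have e2 := huniq (fun j => if j = i then [(1:Fin 2)] else [(0:Fin 2)])
      (c1 (fun j => if j = i then [(1:Fin 2)] else [(0:Fin 2)])
        (fun j => by by_cases h : j = i <;> simp [h])
        (fun x hx => by
          have hxi : x ≠ i := fun h => hi (h ▸ hx)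
          simp [hxi]))
    have := congrFun (e1.trans e2.symm) i
    simp at this
  · refine hom1_ext ?_
    show w₀.flatMap (fun _ => [(0 : Fin 1)])
      = (List.replicate m (0 : Fin 2)).flatMap (fun _ => [(0 : Fin 1)])
    rw [flatMap_sing, flatMap_sing]
    simp [hm]

theorem nodup_of_analytic {n : ℕ} (f : MonLT.Hom n 1) (hf : MonLT.Analytic f) :
    (f 0).Nodup := by
  set w₀ := f 0 with hw₀
  set m := w₀.length with hm
  have horth := hf (MonLT.pi (fun _ : Fin m => (0 : Fin 1)))
    (structural_pi MonLT _) (fun _ => [(0 : Fin 1)])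
    (fun _ => List.finRange m) ?_
  · obtain ⟨w, ⟨hw1, hw2⟩, -⟩ := horth
    have hsing : ∀ j, ∃ a, w j = [a] := by
      intro j
      have h : (w j).flatMap (fun _ => [(0 : Fin 1)]) = [(0 : Fin 1)] :=
        congrFun hw1 j
      have hlen := congrArg List.length h
      rw [flatMap_sing] at hlen
      simp at hlen
      exact List.length_eq_one_iff.1 hlen
    choose g hg using hsing
    have hflatten : w₀.flatMap w = List.finRange m := congrFun hw2 0
    have hmap : w₀.map g = List.finRange m := by
      erw [← hflatten, List.flatMap_def,
        show List.map w w₀ = List.map (fun x => [g x]) w₀ from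
          List.map_congr_left (fun x _ => hg x),
        ← List.flatMap_def, flatMap_sing]
    have : (w₀.map g).Nodup := hmap ▸ List.nodup_finRange m
    exact this.of_map g
  · refine hom1_ext ?_
    show w₀.flatMap (fun _ => [(0 : Fin 1)])
      = (List.finRange m).flatMap (fun _ => [(0 : Fin 1)])
    rw [flatMap_sing, flatMap_sing]
    simp [hm]

theorem perm_of_analytic {n : ℕ} (f : MonLT.Hom n 1) (hf : MonLT.Analytic f) :
    ∃ σ : Equiv.Perm (Fin n), f 0 = List.ofFn ⇑σ := by
  have hnd := nodup_of_analytic f hf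
  have hmem := mem_of_analytic f hf
  have hlen : n = (f 0).length := by
    have h1 : (f 0).toFinset = Finset.univ :=
      Finset.eq_univ_iff_forall.2 fun i => List.mem_toFinset.2 (hmem i)
    have h2 := List.toFinset_card_of_nodup hnd
    rw [h1] at h2
    simpa using h2
  have hinj : Function.Injective (fun i : Fin n => (f 0).get (Fin.cast hlen i)) := by
    intro x y hxy
    have := (List.Nodup.get_inj_iff hnd).1 hxy
    exact Fin.cast_injective _ (by exact this)
  refine ⟨Equiv.ofBijective _ ((Finite.injective_iff_bijective).1 hinj), ?_⟩
  show f 0 = List.ofFn (fun i : Fin n => (f 0).get (Fin.cast hlen i))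
  rw [ofFn_cast hlen (f 0).get, List.ofFn_get]

/-- the symmetric operad of analytic operations of the Lawvere theory of
monoids is the operad of symmetries `Sym`: the analytic morphisms `n → 1` are exactly
the words `x_{σ(1)} ⋯ x_{σ(n)}` for unique permutations `σ`, and their operadic
composition is the composition of the operad `Sym`. -/
theorem monoid_theory_operad_is_Sym :
    (∀ (n : ℕ) (f : MonLT.Hom n 1),
      MonLT.Analytic f ↔ ∃! σ : Equiv.Perm (Fin n), f = fun _ => List.ofFn ⇑σ) ∧
    (∀ (k : ℕ) (ns : Fin k → ℕ) (σs : ∀ i, Equiv.Perm (Fin (ns i)))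
        (τ : Equiv.Perm (Fin k)),
      MonLT.opComp ns (fun i => fun _ => List.ofFn ⇑(σs i)) (fun _ => List.ofFn ⇑τ)
        = fun _ => List.ofFn ⇑(symComp ns σs τ)) := by
  refine ⟨fun n f => ⟨fun hf => ?_, fun h => ?_⟩, part2_aux⟩
  · obtain ⟨σ, hσ⟩ := perm_of_analytic f hf
    refine ⟨σ, hom1_ext hσ, fun σ' h' => ?_⟩
    have heq : List.ofFn ⇑σ' = List.ofFn ⇑σ := (congrFun h' 0).symm.trans hσ
    exact Equiv.coe_fn_injective (List.ofFn_inj.1 heq)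
  · obtain ⟨σ, hσ, -⟩ := h
    rw [hσ]
    exact analytic_of_perm σ
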